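/- In the general reduction graph G, any feasible bootstrap solution S can be transformed into a feasible bootstrap solution S' with |S'| ≤ |S| containing only red and white vertices, and then S' ∩ V_H is a feasible solution to the DVD instance (L, H). Consequently, the optimum of the DVD instance (L, H) equals the optimum of the bootstrap instance (L, G), so the reduction is approximation-preserving. -/

import Mathlib

/-- Colors of vertices in the circuit DAG. -/
inductive Color where
  | white | blue | red
deriving DecidableEq

/-- Number of red vertices on a path (given as a list of vertices). -/
def redCount {V : Type*} (color : V → Color) (p : List V) : ℕ :=
  (p.filter (fun v => decide (color v = Color.red))).length

/-- `p` is an interesting path: it starts and ends at red vertices and traverses exactly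
`L+1` red vertices. -/
def IntPath {V : Type*} (E : V → V → Prop) (color : V → Color) (L : ℕ) (p : List V) : Prop :=
  ∃ hp : p ≠ [], p.Chain' E ∧ color (p.head hp) = Color.red ∧
    color (p.getLast hp) = Color.red ∧ redCount color p = L + 1

variable {α : Type*} [Fintype α] [DecidableEq α]

/-- Indegree of a vertex of `H`. -/
def windeg (EH : α → α → Prop) [DecidableRel EH] (v : α) : ℕ :=
  (Finset.univ.filter (fun u => EH u v)).card

/-- Vertex set of the general reduction graph `G`: original vertices `V_H`
(`.inl (.inl v)`, red), clones `V_H'` (`.inl (.inr v)`, red), the white source `s₀`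
(`.inr (.inl ())`), and the auxiliary blue chain vertices `w_i^{(v)}`
(`.inr (.inr ⟨v, i⟩)`, used when `indegree(v) ≥ 3`). -/
abbrev GVt (α : Type*) [Fintype α] [DecidableEq α]
    (EH : α → α → Prop) [DecidableRel EH] :=
  (α ⊕ α) ⊕ (Unit ⊕ (Σ v : α, Fin (windeg EH v)))

/-- Colors in the general reduction graph. -/
def gcolor (EH : α → α → Prop) [DecidableRel EH] : GVt α EH → Color
  | .inl _ => Color.red
  | .inr (.inl _) => Color.white
  | .inr (.inr _) => Color.blue

/-- Edges of the general reduction graph `G` built from `H` using, for each `v`, an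
enumeration `ord v` of the predecessors of `v`: edges of `H` going into vertices of indegree
at most 2, edges `v → v'` to the clones, edges `s₀ → v` for indegree at most 1, and, for each
`v` of indegree `d ≥ 3`, the blue chain `w₀^{(v)} → ⋯ → w_{d-1}^{(v)} → v` together with the
edges `(ord v i) → w_i^{(v)}` (parallel multiplicities are irrelevant for paths). -/
def GE (EH : α → α → Prop) [DecidableRel EH]
    (ord : ∀ v : α, Fin (windeg EH v) ≃ {u : α // EH u v}) :
    GVt α EH → GVt α EH → Prop
  | .inl (.inl u), .inl (.inl v) => EH u v ∧ windeg EH v ≤ 2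
  | .inl (.inl u), .inl (.inr v) => u = v
  | .inr (.inl _), .inl (.inl v) => windeg EH v ≤ 1
  | .inl (.inl u), .inr (.inr ⟨v, i⟩) => 3 ≤ windeg EH v ∧ ((ord v i : {u : α // EH u v}) : α) = u
  | .inr (.inr ⟨v, i⟩), .inr (.inr ⟨v', j⟩) =>
      3 ≤ windeg EH v ∧ v = v' ∧ (i : ℕ) + 1 = (j : ℕ)
  | .inr (.inr ⟨v, i⟩), .inl (.inl v') =>
      3 ≤ windeg EH v ∧ v = v' ∧ (i : ℕ) + 1 = windeg EH v
  | _, _ => False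

-- generic list lemmas
theorem List.chain'_cons {β : Type*} {R : β → β → Prop} {x y : β} {l : List β} :
    List.Chain' R (x :: y :: l) ↔ R x y ∧ List.Chain' R (y :: l) := List.isChain_cons_cons

theorem List.chain'_cons' {β : Type*} {R : β → β → Prop} {x : β} {l : List β} :
    List.Chain' R (x :: l) ↔ (∀ y ∈ l.head?, R x y) ∧ List.Chain' R l := List.isChain_cons

theorem List.chain'_append {β : Type*} {R : β → β → Prop} {l₁ l₂ : List β} :
    List.Chain' R (l₁ ++ l₂) ↔ List.Chain' R l₁ ∧ List.Chain' R l₂ ∧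
      ∀ x ∈ l₁.getLast?, ∀ y ∈ l₂.head?, R x y := List.isChain_append

theorem List.chain'_singleton {β : Type*} {R : β → β → Prop} (a : β) :
    List.Chain' R [a] := List.isChain_singleton a

theorem List.chain'_pair {β : Type*} {R : β → β → Prop} {x y : β} :
    List.Chain' R [x, y] ↔ R x y := List.isChain_pair

theorem lastSplit {β : Type*} (P : β → Prop) (l : List β) :
    (∃ hl : l ≠ [], P (l.getLast hl)) → (∃ y ∈ l, ¬ P y) →
    ∃ pre r suf, l = pre ++ r :: suf ∧ ¬ P r ∧ suf ≠ [] ∧ ∀ x ∈ suf, P x := by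
  induction l with
  | nil => rintro ⟨h, -⟩; exact absurd rfl h
  | cons x t ih =>
    rintro ⟨hl0, hlast⟩ hex
    by_cases ht : ∃ y ∈ t, ¬ P y
    · have htne : t ≠ [] := by rintro rfl; simp at ht
      obtain ⟨pre, r, suf, he, hr, hsne, hall⟩ :=
        ih ⟨htne, by rwa [List.getLast_cons htne] at hlast⟩ ht
      exact ⟨x :: pre, r, suf, by rw [he]; rfl, hr, hsne, hall⟩
    · push_neg at ht
      have hx : ¬ P x := by
        rcases hex with ⟨y, hy, hny⟩
        rcases List.mem_cons.1 hy with rfl | hy'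
        · exact hny
        · exact absurd (ht y hy') hny
      have htne : t ≠ [] := by
        rintro rfl
        simp at hlast
        exact hx hlast
      exact ⟨[], x, t, by simp, hx, htne, ht⟩

theorem mem_dropLast_split {β : Type*} {z : β} {l : List β} (hz : z ∈ l.dropLast) :
    ∃ a b, l = a ++ z :: b ∧ b ≠ [] := by
  have hl : l ≠ [] := by rintro rfl; simp at hz
  obtain ⟨a, b', hab⟩ := List.append_of_mem hz
  refine ⟨a, b' ++ [l.getLast hl], ?_, by simp⟩
  conv_lhs => rw [← List.dropLast_append_getLast hl, hab]
  simp

theorem mem_dropLast_of_eq {β : Type*} {z : β} {a b l : List β} (h : l = a ++ z :: b)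
    (hb : b ≠ []) : z ∈ l.dropLast := by
  subst h
  rw [List.dropLast_append_cons]
  rcases b with _ | ⟨c, cs⟩
  · exact absurd rfl hb
  · simp [List.dropLast]

theorem mem_dropLast_suffix {β : Type*} {z : β} {a s l : List β} (h : l = a ++ s)
    (hz : z ∈ s.dropLast) : z ∈ l.dropLast := by
  have hs : s ≠ [] := by rintro rfl; simp at hz
  subst h
  rw [List.dropLast_append_of_ne_nil hs]
  exact List.mem_append_right _ hz

theorem redCount_append {V : Type*} (c : V → Color) (a b : List V) :
    redCount c (a ++ b) = redCount c a + redCount c b := by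
  simp [redCount, List.filter_append]

theorem redCount_eq_zero {V : Type*} {c : V → Color} {a : List V}
    (h : ∀ x ∈ a, c x ≠ Color.red) : redCount c a = 0 := by
  simp only [redCount, List.length_eq_zero_iff]
  exact List.filter_eq_nil_iff.2 (by simpa using h)

theorem redCount_le_length {V : Type*} (c : V → Color) (a : List V) :
    redCount c a ≤ a.length := List.length_filter_le _ _

section Part2
variable {α : Type*} [Fintype α] [DecidableEq α] {EH : α → α → Prop} [DecidableRel EH]
  {ord : ∀ v : α, Fin (windeg EH v) ≃ {u : α // EH u v}}

/-- replace blue vertices by their target red vertex -/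
def bmap : GVt α EH → GVt α EH
  | .inr (.inr ⟨v, _⟩) => .inl (.inl v)
  | x => x

theorem bmap_eq_self {x : GVt α EH} (h : gcolor EH x ≠ Color.blue) : bmap x = x := by
  rcases x with (u|u)|(u|⟨v,i⟩) <;> first | rfl | exact absurd rfl h

theorem bmap_not_blue (x : GVt α EH) : gcolor EH (bmap x) ≠ Color.blue := by
  rcases x with (u|u)|(u|⟨v,i⟩) <;> simp [bmap, gcolor]

theorem blue_shape {x : GVt α EH} (h : gcolor EH x = Color.blue) :
    ∃ v, ∃ i : Fin (windeg EH v), x = .inr (.inr ⟨v, i⟩) := by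
  rcases x with (u|u)|(u|⟨v,i⟩) <;>
    first | simp_all [gcolor] | exact ⟨v, i, rfl⟩

theorem GE_from_blue {v : α} {i : Fin (windeg EH v)} {y : GVt α EH}
    (h : GE EH ord (.inr (.inr ⟨v, i⟩)) y) :
    (∃ j : Fin (windeg EH v), y = .inr (.inr ⟨v, j⟩)) ∨ y = .inl (.inl v) := by
  rcases y with (u|u)|(u|⟨v',j⟩) <;> simp only [GE] at h
  · right; obtain ⟨-, rfl, -⟩ := h; rfl
  · left; obtain ⟨-, rfl, -⟩ := h; exact ⟨j, rfl⟩

theorem GE_from_clone {u : α} {y : GVt α EH} (h : GE EH ord (.inl (.inr u)) y) : False := by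
  rcases y with (w|w)|(w|⟨v',j⟩) <;> simp only [GE] at h

theorem GE_to_blue {v : α} {i : Fin (windeg EH v)} {x : GVt α EH}
    (h : GE EH ord x (.inr (.inr ⟨v, i⟩))) :
    (∃ u, x = .inl (.inl u)) ∨ (∃ j : Fin (windeg EH v), x = .inr (.inr ⟨v, j⟩)) := by
  rcases x with (u|u)|(u|⟨v',j⟩) <;> simp only [GE] at h
  · exact Or.inl ⟨u, rfl⟩
  · obtain ⟨-, rfl, -⟩ := h; exact Or.inr ⟨j, rfl⟩

theorem GE_from_red {u : α} {y : GVt α EH} (h : GE EH ord (.inl (.inl u)) y) :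
    (∃ v, y = .inl (.inl v) ∧ EH u v) ∨ y = .inl (.inr u) ∨
      (∃ v, ∃ i : Fin (windeg EH v), y = .inr (.inr ⟨v, i⟩) ∧ EH u v) := by
  rcases y with (w|w)|(w|⟨v',j⟩) <;> simp only [GE] at h
  · exact Or.inl ⟨w, rfl, h.1⟩
  · subst h; exact Or.inr (Or.inl rfl)
  · refine Or.inr (Or.inr ⟨v', j, rfl, ?_⟩)
    have := (ord v' j).2
    rwa [h.2] at this

/-- a path starting at a blue vertex of the chain of `v` that contains a red vertex
must pass through `v`, after an all-blue prefix. -/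
theorem blueChain (p : List (GVt α EH)) : p.Chain' (GE EH ord) →
    ∀ v (i : Fin (windeg EH v)), p.head? = some (.inr (.inr ⟨v, i⟩)) →
    (∃ r ∈ p, gcolor EH r = Color.red) →
    ∃ a b, p = a ++ (.inl (.inl v) : GVt α EH) :: b ∧ ∀ x ∈ a, gcolor EH x = Color.blue := by
  induction p with
  | nil => intro _ v i h; simp at h
  | cons x t ih =>
    intro hch v i hx hr
    rw [List.head?_cons, Option.some_inj] at hx
    subst hx
    rcases t with _ | ⟨y, t'⟩
    · obtain ⟨r, hr1, hr2⟩ := hr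
      simp only [List.mem_singleton] at hr1
      subst hr1
      simp [gcolor] at hr2
    · have hxy : GE EH ord (.inr (.inr ⟨v, i⟩)) y := (List.chain'_cons.1 hch).1
      rcases GE_from_blue hxy with ⟨j, rfl⟩ | rfl
      · have hrt : ∃ r ∈ (.inr (.inr ⟨v, j⟩) : GVt α EH) :: t', gcolor EH r = Color.red := by
          obtain ⟨r, hr1, hr2⟩ := hr
          rcases List.mem_cons.1 hr1 with rfl | h'
          · simp [gcolor] at hr2
          · exact ⟨r, h', hr2⟩
        obtain ⟨a, b, ht, hblue⟩ := ih (List.chain'_cons.1 hch).2 v j rfl hrt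
        refine ⟨.inr (.inr ⟨v, i⟩) :: a, b, by rw [ht]; rfl, ?_⟩
        intro x hx
        rcases List.mem_cons.1 hx with rfl | hx'
        · rfl
        · exact hblue x hx'
      · exact ⟨[.inr (.inr ⟨v, i⟩)], t', by simp, by simp [gcolor]⟩

end Part2

section Part3
open List
variable {β : Type*}

theorem head_eq_of_head?_eq {l l' : List β} (h : l.head? = l'.head?)
    (hl : l ≠ []) (hl' : l' ≠ []) : l.head hl = l'.head hl' := by
  rw [List.head?_eq_head hl, List.head?_eq_head hl'] at h
  exact Option.some_inj.1 h

theorem getLast_eq_of_getLast?_eq {l : List β} {x : β} (h : l.getLast? = some x)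
    (hl : l ≠ []) : l.getLast hl = x := by
  rw [List.getLast?_eq_getLast hl, Option.some_inj] at h
  exact h

theorem head?_append_of_ne_nil (l l' : List β) (h : l ≠ []) :
    (l ++ l').head? = l.head? := by
  rcases l with _ | ⟨x, t⟩
  · exact absurd rfl h
  · rfl

theorem getLast?_append_of_ne_nil (l l' : List β) (h : l' ≠ []) :
    (l ++ l').getLast? = l'.getLast? := by
  rw [List.getLast?_append]
  rcases l' with _ | ⟨x, t⟩
  · exact absurd rfl h
  · rw [Option.or_of_isSome]
    exact Option.isSome_iff_exists.2 ⟨_, (x :: t).getLast?_eq_getLast (by simp)⟩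

variable {α : Type*} [Fintype α] [DecidableEq α] {EH : α → α → Prop} [DecidableRel EH]
  {ord : ∀ v : α, Fin (windeg EH v) ≃ {u : α // EH u v}}

theorem feas_image (L : ℕ) (S : Finset (GVt α EH))
    (hfeas : ∀ p : List (GVt α EH), IntPath (GE EH ord) (gcolor EH) L p →
      ∃ z ∈ p.dropLast, z ∈ S) :
    ∀ (n : ℕ) (p : List (GVt α EH)), p.length ≤ n →
      IntPath (GE EH ord) (gcolor EH) L p →
      ∃ z ∈ p.dropLast, z ∈ S.image bmap := by
  intro n
  induction n with
  | zero =>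
    intro p hlen hip
    obtain ⟨hp, -⟩ := hip
    rw [Nat.le_zero, List.length_eq_zero_iff] at hlen
    exact absurd hlen hp
  | succ n ih =>
    intro p hlen hip
    obtain ⟨hp, hch, hhd, hlst, hcnt⟩ := hip
    obtain ⟨z, hzd, hzS⟩ := hfeas p ⟨hp, hch, hhd, hlst, hcnt⟩
    by_cases hzb : gcolor EH z = Color.blue
    case neg =>
      exact ⟨z, hzd, Finset.mem_image.2 ⟨z, hzS, bmap_eq_self hzb⟩⟩
    obtain ⟨v, i, rfl⟩ := blue_shape hzb
    set z : GVt α EH := .inr (.inr ⟨v, i⟩) with hz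
    obtain ⟨a, b, hpab, hbne⟩ := mem_dropLast_split hzd
    -- chain on the suffix z :: b
    have hchzb : (z :: b).Chain' (GE EH ord) := by
      rw [hpab] at hch
      exact (List.chain'_append.1 hch).2.1
    -- the last vertex of p is red and lies in z :: b
    have hlast? : p.getLast? = some (p.getLast hp) := List.getLast?_eq_getLast hp
    have hlastzb : (z :: b).getLast? = some (p.getLast hp) := by
      rw [← hlast?, hpab, getLast?_append_of_ne_nil _ _ (by simp)]
    have hredzb : ∃ r ∈ z :: b, gcolor EH r = Color.red := by
      refine ⟨p.getLast hp, ?_, hlst⟩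
      have := getLast_eq_of_getLast?_eq hlastzb (l := z :: b) (by simp)
      rw [← this]
      exact List.getLast_mem _
    obtain ⟨c, d, hcd, hcblue⟩ := blueChain (z :: b) hchzb v i rfl hredzb
    by_cases hd : d = []
    case neg =>
      refine ⟨.inl (.inl v), ?_, Finset.mem_image.2 ⟨z, hzS, rfl⟩⟩
      refine mem_dropLast_of_eq (a := a ++ c) (b := d) ?_ hd
      rw [hpab, hcd, List.append_assoc]
    subst hd
    -- now p = a ++ c ++ [red v], with z ∈ c all blue
    have hpac : p = (a ++ c) ++ [.inl (.inl v)] := by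
      rw [hpab, hcd, List.append_assoc]
    have hane : a ≠ [] := by
      rintro rfl
      have h1 : p.head? = some z := by rw [hpab]; rfl
      have h2 : p.head hp = z := Option.some_inj.1 ((List.head?_eq_head hp).symm.trans h1)
      rw [h2] at hhd
      rw [hhd] at hzb
      simp at hzb
    have hcne : c ≠ [] := by
      rintro rfl
      simp only [List.nil_append] at hcd
      have : z = .inl (.inl v) := (List.cons_eq_cons.1 hcd).1
      rw [this] at hzb
      simp [gcolor] at hzb
    have htne : a ++ c ≠ [] := by simp [hane]
    -- decompose a ++ c at the last non-blue vertex
    have hsplit := lastSplit (fun x => gcolor EH x = Color.blue) (a ++ c)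
      ⟨htne, by
        rw [getLast_eq_of_getLast?_eq (x := c.getLast hcne)
          (by rw [getLast?_append_of_ne_nil _ _ hcne]; exact List.getLast?_eq_getLast hcne) htne]
        exact hcblue _ (List.getLast_mem hcne)⟩
      ⟨(a ++ c).head htne, List.head_mem htne, by
        have hh : (a ++ c).head htne = p.head hp := by
          refine head_eq_of_head?_eq ?_ htne hp
          rw [hpac, head?_append_of_ne_nil _ _ htne]
        rw [hh]
        simp [hhd]⟩
    obtain ⟨pre, r, suf, hts, hrnb, hsufne, hsufblue⟩ := hsplit
    -- identify r as an original red vertex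
    have hchain_t : (a ++ c).Chain' (GE EH ord) := by
      rw [hpac] at hch
      exact (List.chain'_append.1 hch).1
    obtain ⟨s, suf', rfl⟩ : ∃ s suf', suf = s :: suf' := by
      rcases suf with _ | ⟨s, suf'⟩
      · exact absurd rfl hsufne
      · exact ⟨s, suf', rfl⟩
    have hrs : GE EH ord r s := by
      rw [hts] at hchain_t
      exact (List.chain'_cons.1 ((List.chain'_append (l₁ := pre)).1 hchain_t).2.1).1
    obtain ⟨vs, js, rfl⟩ := blue_shape (hsufblue s (by simp))
    obtain ⟨u, rfl⟩ : ∃ u, r = .inl (.inl u) := by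
      rcases GE_to_blue hrs with ⟨u, rfl⟩ | ⟨j, rfl⟩
      · exact ⟨u, rfl⟩
      · exact absurd rfl hrnb
    -- build the shorter interesting path q
    set q : List (GVt α EH) := (pre ++ [.inl (.inl u)]) ++ [.inl (.inr u)] with hq
    have hqne : q ≠ [] := by simp [hq]
    have hchain_pre : List.Chain' (GE EH ord) (pre ++ [(.inl (.inl u) : GVt α EH)]) := by
      have : a ++ c = (pre ++ [.inl (.inl u)]) ++ (.inr (.inr ⟨vs, js⟩)) :: suf' := by
        rw [hts]; simp
      rw [this] at hchain_t
      exact (List.chain'_append.1 hchain_t).1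
    have hchq : q.Chain' (GE EH ord) := by
      rw [hq, List.chain'_append]
      refine ⟨hchain_pre, List.chain'_singleton _, ?_⟩
      intro x hx y hy
      simp only [List.getLast?_concat, Option.mem_def, Option.some_inj] at hx
      simp only [List.head?_cons, Option.mem_def, Option.some_inj] at hy
      subst hx; subst hy
      show GE EH ord (.inl (.inl u)) (.inl (.inr u))
      simp only [GE]
    have hhdq : gcolor EH (q.head hqne) = Color.red := by
      have h1 : q.head? = (a ++ c).head? := by
        rw [hq, hts]
        rcases pre with _ | ⟨w, pre'⟩ <;> rfl
      have h2 : q.head hqne = p.head hp := by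
        refine head_eq_of_head?_eq ?_ hqne hp
        rw [h1, hpac, head?_append_of_ne_nil _ _ htne]
      rw [h2]; exact hhd
    have hlstq : gcolor EH (q.getLast hqne) = Color.red := by
      rw [getLast_eq_of_getLast?_eq (x := .inl (.inr u)) (by rw [hq]; exact List.getLast?_concat) hqne]
      rfl
    have hcnt_t : redCount (gcolor EH) (a ++ c) = L := by
      have h1 : redCount (gcolor EH) [(.inl (.inl v) : GVt α EH)] = 1 := by
        simp [redCount, gcolor]
      have := hcnt
      rw [hpac, redCount_append, h1] at this
      omega
    have hcnt_pre : redCount (gcolor EH) (pre ++ [(.inl (.inl u) : GVt α EH)]) = L := by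
      have h0 : redCount (gcolor EH) ((.inr (.inr ⟨vs, js⟩) : GVt α EH) :: suf') = 0 :=
        redCount_eq_zero (by
          intro x hx
          rw [hsufblue x hx]
          simp)
      have : a ++ c = (pre ++ [(.inl (.inl u) : GVt α EH)]) ++ ((.inr (.inr ⟨vs, js⟩)) :: suf') := by
        rw [hts]; simp
      rw [this, redCount_append, h0] at hcnt_t
      omega
    have hcntq : redCount (gcolor EH) q = L + 1 := by
      have h1 : redCount (gcolor EH) [(.inl (.inr u) : GVt α EH)] = 1 := by
        simp [redCount, gcolor]
      rw [hq, redCount_append, hcnt_pre, h1]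
    have hlenq : q.length ≤ n := by
      have hlp : p.length = pre.length + suf'.length + 3 := by
        rw [hpac, hts]
        simp
        omega
      have : q.length = pre.length + 2 := by rw [hq]; simp
      omega
    obtain ⟨z', hz'd, hz'S⟩ := ih q hlenq ⟨hqne, hchq, hhdq, hlstq, hcntq⟩
    refine ⟨z', ?_, hz'S⟩
    -- z' ∈ q.dropLast = pre ++ [red u] ⊆ (a ++ c) = p.dropLast
    have hz'm : z' ∈ pre ++ [(.inl (.inl u) : GVt α EH)] := by
      rw [hq, List.dropLast_concat] at hz'd
      exact hz'd
    have hz't : z' ∈ a ++ c := by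
      rw [hts]
      rcases List.mem_append.1 hz'm with h' | h'
      · exact List.mem_append_left _ h'
      · simp only [List.mem_singleton] at h'
        subst h'
        exact List.mem_append_right _ (List.mem_cons_self)
    have : p.dropLast = a ++ c := by rw [hpac, List.dropLast_concat]
    rw [this]
    exact hz't

end Part3

section Part4
variable {α : Type*} [Fintype α] [DecidableEq α] {EH : α → α → Prop} [DecidableRel EH]
  {ord : ∀ v : α, Fin (windeg EH v) ≃ {u : α // EH u v}}

theorem head_eq_of_head?_some {β : Type*} {l : List β} {x : β} (h : l.head? = some x)
    (hl : l ≠ []) : l.head hl = x :=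
  Option.some_inj.1 ((List.head?_eq_head hl).symm.trans h)

theorem chainSeg (v : α) (hd : 3 ≤ windeg EH v) :
    ∀ (k : ℕ) (i : Fin (windeg EH v)), windeg EH v - (i : ℕ) = k + 1 →
    ∃ c : List (GVt α EH), c.head? = some (.inr (.inr ⟨v, i⟩)) ∧
      (∀ x ∈ c, gcolor EH x = Color.blue) ∧
      List.Chain' (GE EH ord) (c ++ [.inl (.inl v)]) := by
  intro k
  induction k with
  | zero =>
    intro i hi
    refine ⟨[.inr (.inr ⟨v, i⟩)], rfl, by simp [gcolor], ?_⟩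
    refine List.chain'_pair.2 ?_
    have := i.isLt
    exact ⟨hd, rfl, by omega⟩
  | succ k ih =>
    intro i hi
    have hi1 : (i : ℕ) + 1 < windeg EH v := by omega
    obtain ⟨c, hch, hcb, hcc⟩ := ih ⟨(i : ℕ) + 1, hi1⟩ (by simp; omega)
    have hcne : c ≠ [] := by rintro rfl; simp at hch
    refine ⟨.inr (.inr ⟨v, i⟩) :: c, rfl, ?_, ?_⟩
    · intro x hx
      rcases List.mem_cons.1 hx with rfl | hx'
      · rfl
      · exact hcb x hx'
    · rw [List.cons_append]
      refine List.chain'_cons'.2 ⟨?_, hcc⟩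
      intro y hy
      rw [head?_append_of_ne_nil _ _ hcne, hch, Option.mem_def, Option.some_inj] at hy
      subst hy
      exact ⟨hd, rfl, rfl⟩

theorem connector {u v : α} (h : EH u v) :
    ∃ c : List (GVt α EH), (∀ x ∈ c, gcolor EH x = Color.blue) ∧
      List.Chain' (GE EH ord) ((.inl (.inl u)) :: (c ++ [.inl (.inl v)])) := by
  by_cases hd : windeg EH v ≤ 2
  · exact ⟨[], by simp, List.chain'_pair.2 ⟨h, hd⟩⟩
  · push_neg at hd
    set i : Fin (windeg EH v) := (ord v).symm ⟨u, h⟩ with hi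
    obtain ⟨c, hch, hcb, hcc⟩ := chainSeg (ord := ord) v hd (windeg EH v - (i : ℕ) - 1) i
      (by have := i.isLt; omega)
    have hcne : c ≠ [] := by rintro rfl; simp at hch
    refine ⟨c, hcb, ?_⟩
    · refine List.chain'_cons'.2 ⟨?_, hcc⟩
      intro y hy
      rw [head?_append_of_ne_nil _ _ hcne, hch, Option.mem_def, Option.some_inj] at hy
      subst hy
      refine ⟨hd, ?_⟩
      rw [hi, Equiv.apply_symm_apply]

theorem buildPath (u : α) : ∀ (q : List α), List.Chain' EH (u :: q) →
    ∃ p : List (GVt α EH),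
      List.Chain' (GE EH ord) ((.inl (.inl u)) :: p) ∧
      ((.inl (.inl u) : GVt α EH) :: p).getLast? =
        some (.inl (.inl ((u :: q).getLast (by simp)))) ∧
      List.filter (fun x => decide (gcolor EH x = Color.red)) ((.inl (.inl u)) :: p) =
        (u :: q).map (fun w => .inl (.inl w)) ∧
      (∀ x ∈ (.inl (.inl u) : GVt α EH) :: p, gcolor EH x ≠ Color.white) := by
  intro q
  induction q generalizing u with
  | nil =>
    intro _
    exact ⟨[], List.chain'_singleton _, rfl, by simp [gcolor], by simp [gcolor]⟩
  | cons v q' ih =>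
    intro hch
    have huv : EH u v := (List.chain'_cons.1 hch).1
    obtain ⟨c, hcb, hcc⟩ := connector (ord := ord) huv
    obtain ⟨p', hp'c, hp'l, hp'f, hp'w⟩ := ih v (List.chain'_cons.1 hch).2
    refine ⟨c ++ (.inl (.inl v)) :: p', ?_, ?_, ?_, ?_⟩
    · have heq : (.inl (.inl u) : GVt α EH) :: (c ++ (.inl (.inl v)) :: p') =
          ((.inl (.inl u)) :: c) ++ ((.inl (.inl v)) :: p') := by simp
      rw [heq, List.chain'_append]
      have hcc' : List.Chain' (GE EH ord) (((.inl (.inl u) : GVt α EH) :: c) ++ [.inl (.inl v)]) := by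
        simpa using hcc
      refine ⟨(List.chain'_append.1 hcc').1, hp'c, ?_⟩
      intro x hx y hy
      rw [List.head?_cons, Option.mem_def, Option.some_inj] at hy
      subst hy
      exact (List.chain'_append.1 hcc').2.2 x hx (.inl (.inl v)) rfl
    · have heq : (.inl (.inl u) : GVt α EH) :: (c ++ (.inl (.inl v)) :: p') =
          ((.inl (.inl u)) :: c) ++ ((.inl (.inl v)) :: p') := by simp
      rw [heq, getLast?_append_of_ne_nil _ _ (by simp), hp'l]
      congr 1
    · have hfc : List.filter (fun x => decide (gcolor EH x = Color.red)) c = [] := by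
        refine List.filter_eq_nil_iff.2 ?_
        intro x hx
        simp [hcb x hx]
      rw [List.filter_cons_of_pos (by simp [gcolor]), List.filter_append, hfc,
        List.nil_append, hp'f]
      simp
    · intro x hx
      rcases List.mem_cons.1 hx with rfl | hx'
      · simp [gcolor]
      rcases List.mem_append.1 hx' with h' | h'
      · rw [hcb x h']; simp
      · exact hp'w x h'

end Part4

section Part5
variable {α : Type*} [Fintype α] [DecidableEq α] {EH : α → α → Prop} [DecidableRel EH]
  {ord : ∀ v : α, Fin (windeg EH v) ≃ {u : α // EH u v}}

theorem dvd_feasible (L : ℕ) (hL : 1 ≤ L) (S' : Finset (GVt α EH))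
    (hS' : ∀ p : List (GVt α EH), IntPath (GE EH ord) (gcolor EH) L p →
      ∃ z ∈ p.dropLast, z ∈ S')
    (hnb : ∀ z ∈ S', gcolor EH z ≠ Color.blue) :
    ∀ q : List α, List.Chain' EH q → q.length = L →
      ∃ u ∈ q, (.inl (.inl u) : GVt α EH) ∈ S' := by
  intro q hq hlen
  obtain ⟨u, q', rfl⟩ : ∃ u q', q = u :: q' := by
    rcases q with _ | ⟨u, q'⟩
    · simp at hlen; omega
    · exact ⟨u, q', rfl⟩
  obtain ⟨p, hpc, hpl, hpf, hpw⟩ := buildPath (ord := ord) u q' hq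
  set w : α := (u :: q').getLast (by simp) with hw
  set P : List (GVt α EH) := ((.inl (.inl u)) :: p) ++ [.inl (.inr w)] with hP
  have hPne : P ≠ [] := by simp [hP]
  have hip : IntPath (GE EH ord) (gcolor EH) L P := by
    refine ⟨hPne, ?_, ?_, ?_, ?_⟩
    · rw [hP, List.chain'_append]
      refine ⟨hpc, List.chain'_singleton _, ?_⟩
      intro x hx y hy
      rw [hpl, Option.mem_def, Option.some_inj] at hx
      rw [List.head?_cons, Option.mem_def, Option.some_inj] at hy
      subst hx; subst hy
      show GE EH ord (.inl (.inl w)) (.inl (.inr w))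
      simp only [GE]
    · have h1 : P.head? = some (.inl (.inl u)) := by rw [hP]; rfl
      rw [head_eq_of_head?_some h1 hPne]
      rfl
    · rw [getLast_eq_of_getLast?_eq (x := .inl (.inr w)) (by rw [hP]; exact List.getLast?_concat) hPne]
      rfl
    · have h1 : redCount (gcolor EH) ((.inl (.inl u) : GVt α EH) :: p) = L := by
        rw [redCount, hpf, List.length_map]
        simpa using hlen
      have h2 : redCount (gcolor EH) [(.inl (.inr w) : GVt α EH)] = 1 := by
        simp [redCount, gcolor]
      rw [hP, redCount_append, h1, h2]
  obtain ⟨z, hzd, hzS⟩ := hS' P hip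
  rw [hP, List.dropLast_concat] at hzd
  have hznw : gcolor EH z ≠ Color.white := hpw z hzd
  have hznb : gcolor EH z ≠ Color.blue := hnb z hzS
  have hzr : gcolor EH z = Color.red := by
    rcases hc : gcolor EH z with _ | _ | _
    · exact absurd hc hznw
    · exact absurd hc hznb
    · rfl
  have hzf : z ∈ List.filter (fun x => decide (gcolor EH x = Color.red))
      ((.inl (.inl u) : GVt α EH) :: p) :=
    List.mem_filter.2 ⟨hzd, by simp [hzr]⟩
  rw [hpf] at hzf
  obtain ⟨x, hx, hxz⟩ := List.mem_map.1 hzf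
  exact ⟨x, hx, by rwa [← hxz] at hzS⟩

theorem exists_red_of_redCount_pos {p : List (GVt α EH)}
    (h : 0 < redCount (gcolor EH) p) : ∃ r ∈ p, gcolor EH r = Color.red := by
  rw [redCount, List.length_pos_iff] at h
  obtain ⟨r, hr⟩ := List.exists_mem_of_ne_nil _ h
  have := List.mem_filter.1 hr
  exact ⟨r, this.1, by simpa using this.2⟩

theorem extract : ∀ (n : ℕ) (p : List (GVt α EH)), p.length ≤ n →
    List.Chain' (GE EH ord) p → ∀ u, p.head? = some (.inl (.inl u)) →
    ∀ m, redCount (gcolor EH) p = m + 2 →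
    ∃ q : List α, List.Chain' EH (u :: q) ∧ (u :: q).length = m + 1 ∧
      ∀ x ∈ u :: q, (.inl (.inl x) : GVt α EH) ∈ p.dropLast := by
  intro n
  induction n with
  | zero =>
    intro p hlen hch u hu m hm
    rw [Nat.le_zero, List.length_eq_zero_iff] at hlen
    subst hlen; simp at hu
  | succ n ih =>
    intro p hlen hch u hu m hm
    obtain ⟨t, rfl⟩ : ∃ t, p = (.inl (.inl u) : GVt α EH) :: t := by
      rcases p with _ | ⟨x, t⟩
      · simp at hu
      · rw [List.head?_cons, Option.some_inj] at hu
        exact ⟨t, by rw [hu]⟩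
    have hredt : redCount (gcolor EH) t = m + 1 := by
      have h1 : redCount (gcolor EH) ((.inl (.inl u) : GVt α EH) :: t)
          = redCount (gcolor EH) t + 1 := by
        simp [redCount, List.filter_cons_of_pos, gcolor]
      omega
    have htne : t ≠ [] := by
      rintro rfl; simp [redCount] at hredt
    obtain ⟨y, t', rfl⟩ : ∃ y t', t = y :: t' := by
      rcases t with _ | ⟨y, t'⟩
      · exact absurd rfl htne
      · exact ⟨y, t', rfl⟩
    have hxy : GE EH ord (.inl (.inl u)) y := (List.chain'_cons.1 hch).1
    have hcht : List.Chain' (GE EH ord) (y :: t') := (List.chain'_cons.1 hch).2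
    rcases m with _ | m
    · -- m = 0 : take q = []
      refine ⟨[], List.chain'_singleton _, rfl, ?_⟩
      intro x hx
      rw [List.mem_singleton] at hx
      subst hx
      rw [List.dropLast_cons_of_ne_nil (by simp)]
      exact List.mem_cons_self
    · -- find the next red vertex
      rcases GE_from_red hxy with ⟨v, rfl, hEH⟩ | rfl | ⟨v, j, rfl, hEH⟩
      · -- direct edge to a red original vertex
        obtain ⟨q', hq'c, hq'l, hq'm⟩ := ih ((.inl (.inl v)) :: t')
          (by simpa using Nat.le_of_succ_le_succ hlen) hcht v rfl m hredt
        refine ⟨v :: q', List.chain'_cons.2 ⟨hEH, hq'c⟩, by simpa using hq'l, ?_⟩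
        intro x hx
        rcases List.mem_cons.1 hx with rfl | hx'
        · rw [List.dropLast_cons_of_ne_nil (by simp)]
          exact List.mem_cons_self
        · have := hq'm x hx'
          rw [List.dropLast_cons_of_ne_nil (by simp)]
          exact List.mem_cons_of_mem _ this
      · -- edge to the clone : impossible since more reds follow
        exfalso
        rcases t' with _ | ⟨d, t''⟩
        · simp [redCount, gcolor] at hredt
        · exact GE_from_clone (ord := ord) (List.chain'_cons.1 hcht).1
      · -- edge into a blue chain towards v
        have hred : ∃ r ∈ (.inr (.inr ⟨v, j⟩) : GVt α EH) :: t', gcolor EH r = Color.red :=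
          exists_red_of_redCount_pos (by rw [hredt]; omega)
        obtain ⟨c, d, hcd, hcb⟩ := blueChain ((.inr (.inr ⟨v, j⟩)) :: t') hcht v j rfl hred
        have hchd : List.Chain' (GE EH ord) ((.inl (.inl v)) :: d) := by
          rw [hcd] at hcht
          exact (List.chain'_append.1 hcht).2.1
        have hrc : redCount (gcolor EH) ((.inl (.inl v) : GVt α EH) :: d) = m + 2 := by
          have h0 : redCount (gcolor EH) c = 0 :=
            redCount_eq_zero (fun x hx => by rw [hcb x hx]; simp)
          rw [hcd, redCount_append, h0] at hredt
          omega
        have hlend : ((.inl (.inl v) : GVt α EH) :: d).length ≤ n := by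
          have h1 := congrArg List.length hcd
          have h2 : ((.inr (.inr ⟨v, j⟩) : GVt α EH) :: t').length + 1 ≤ n + 1 := by
            simpa using hlen
          simp only [List.length_cons, List.length_append] at h1 h2 ⊢
          omega
        obtain ⟨q', hq'c, hq'l, hq'm⟩ := ih _ hlend hchd v rfl m hrc
        refine ⟨v :: q', List.chain'_cons.2 ⟨hEH, hq'c⟩, by simpa using hq'l, ?_⟩
        intro x hx
        rcases List.mem_cons.1 hx with rfl | hx'
        · rw [List.dropLast_cons_of_ne_nil (by simp)]
          exact List.mem_cons_self
        · have hmem := hq'm x hx'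
          have hpe : (Sum.inl (Sum.inl u) : GVt α EH) :: .inr (.inr ⟨v, j⟩) :: t'
              = ((Sum.inl (Sum.inl u) : GVt α EH) :: c) ++ ((.inl (.inl v)) :: d) := by
            rw [List.cons_append, hcd]
          exact mem_dropLast_suffix hpe hmem

end Part5

section Part6
variable {α : Type*} [Fintype α] [DecidableEq α] {EH : α → α → Prop} [DecidableRel EH]
  {ord : ∀ v : α, Fin (windeg EH v) ≃ {u : α // EH u v}}

theorem head_shape {L : ℕ} (hL : 2 ≤ L) {p : List (GVt α EH)}
    (hp : p ≠ []) (hch : List.Chain' (GE EH ord) p)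
    (hhd : gcolor EH (p.head hp) = Color.red) (hcnt : redCount (gcolor EH) p = L + 1) :
    ∃ u, p.head? = some (.inl (.inl u)) := by
  rcases p with _ | ⟨x, t⟩
  · exact absurd rfl hp
  rw [List.head_cons] at hhd
  rcases x with (u|u)|(u|⟨v,i⟩)
  · exact ⟨u, rfl⟩
  · -- clone head : impossible
    exfalso
    rcases t with _ | ⟨d, t'⟩
    · simp [redCount, gcolor] at hcnt; omega
    · exact GE_from_clone (ord := ord) (List.chain'_cons.1 hch).1
  · simp [gcolor] at hhd
  · simp [gcolor] at hhd

end Part6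

/-- in the general reduction graph `G`, every feasible bootstrap solution `S`
can be transformed into a feasible bootstrap solution `S'` with `|S'| ≤ |S|` containing no
blue vertex, and then `S' ∩ V_H` is a feasible DVD solution for `(L,H)`; consequently the
optimum of the DVD instance `(L,H)` equals the optimum of the bootstrap instance `(L,G)`
(so the reduction is approximation-preserving). -/
theorem stmt15 (EH : α → α → Prop) [DecidableRel EH]
    (hdag : WellFounded EH) (L : ℕ) (hL : 2 ≤ L)
    (ord : ∀ v : α, Fin (windeg EH v) ≃ {u : α // EH u v})
    (S : Finset (GVt α EH))
    (hfeas : ∀ p : List (GVt α EH), IntPath (GE EH ord) (gcolor EH) L p →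
      ∃ z ∈ p.dropLast, z ∈ S) :
    (∃ S' : Finset (GVt α EH),
      (∀ p : List (GVt α EH), IntPath (GE EH ord) (gcolor EH) L p →
        ∃ z ∈ p.dropLast, z ∈ S') ∧
      S'.card ≤ S.card ∧
      (∀ z ∈ S', gcolor EH z ≠ Color.blue) ∧
      (∀ q : List α, q.Chain' EH → q.length = L →
        ∃ u ∈ q, (Sum.inl (Sum.inl u) : GVt α EH) ∈ S')) ∧
    sInf {n : ℕ | ∃ D : Finset α,
        (∀ q : List α, q.Chain' EH → q.length = L → ∃ u ∈ q, u ∈ D) ∧ D.card = n} =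
    sInf {n : ℕ | ∃ T : Finset (GVt α EH),
        (∀ p : List (GVt α EH), IntPath (GE EH ord) (gcolor EH) L p →
          ∃ z ∈ p.dropLast, z ∈ T) ∧ T.card = n} := by
  classical
  have feasIm : ∀ (T : Finset (GVt α EH)),
      (∀ p : List (GVt α EH), IntPath (GE EH ord) (gcolor EH) L p →
        ∃ z ∈ p.dropLast, z ∈ T) →
      (∀ p : List (GVt α EH), IntPath (GE EH ord) (gcolor EH) L p →
        ∃ z ∈ p.dropLast, z ∈ T.image bmap) := by
    intro T hT p hip
    exact feas_image L T hT p.length p le_rfl hip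
  have noblue : ∀ (T : Finset (GVt α EH)), ∀ z ∈ T.image bmap, gcolor EH z ≠ Color.blue := by
    intro T z hz
    obtain ⟨x, -, rfl⟩ := Finset.mem_image.1 hz
    exact bmap_not_blue x
  have dvdcl : ∀ (T : Finset (GVt α EH)),
      (∀ p : List (GVt α EH), IntPath (GE EH ord) (gcolor EH) L p →
        ∃ z ∈ p.dropLast, z ∈ T) →
      ∀ q : List α, List.Chain' EH q → q.length = L →
        ∃ u ∈ q, (.inl (.inl u) : GVt α EH) ∈ T.image bmap := by
    intro T hT
    exact dvd_feasible L (by omega) _ (feasIm T hT) (noblue T)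
  have tfeasOf : ∀ (D : Finset α),
      (∀ q : List α, List.Chain' EH q → q.length = L → ∃ u ∈ q, u ∈ D) →
      ∀ p : List (GVt α EH), IntPath (GE EH ord) (gcolor EH) L p →
        ∃ z ∈ p.dropLast, z ∈ D.image (fun u => (.inl (.inl u) : GVt α EH)) := by
    intro D hD p hip
    obtain ⟨hp, hch, hhd, hlst, hcnt⟩ := hip
    obtain ⟨u, hu⟩ := head_shape hL hp hch hhd hcnt
    obtain ⟨q, hqc, hql, hqm⟩ := extract p.length p le_rfl hch u hu (L - 1) (by omega)
    obtain ⟨x, hxq, hxD⟩ := hD (u :: q) hqc (by simp at hql ⊢; omega)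
    exact ⟨.inl (.inl x), hqm x hxq, Finset.mem_image_of_mem _ hxD⟩
  constructor
  · exact ⟨S.image bmap, feasIm S hfeas, Finset.card_image_le, noblue S, dvdcl S hfeas⟩
  · have hAne : Set.Nonempty {n : ℕ | ∃ D : Finset α,
        (∀ q : List α, q.Chain' EH → q.length = L → ∃ u ∈ q, u ∈ D) ∧ D.card = n} := by
      refine ⟨Finset.univ.card, Finset.univ, ?_, rfl⟩
      intro q hc hl
      have hq : q ≠ [] := by rintro rfl; simp at hl; omega
      exact ⟨q.head hq, List.head_mem hq, Finset.mem_univ _⟩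
    have hBne : Set.Nonempty {n : ℕ | ∃ T : Finset (GVt α EH),
        (∀ p : List (GVt α EH), IntPath (GE EH ord) (gcolor EH) L p →
          ∃ z ∈ p.dropLast, z ∈ T) ∧ T.card = n} := by
      refine ⟨Finset.univ.card, Finset.univ, ?_, rfl⟩
      intro p hip
      obtain ⟨hp, hch, hhd, hlst, hcnt⟩ := hip
      have hlen : 2 ≤ p.length := by
        have := redCount_le_length (gcolor EH) p
        omega
      have hdne : p.dropLast ≠ [] := by
        rw [← List.length_pos_iff, List.length_dropLast]
        omega
      obtain ⟨z, hz⟩ := List.exists_mem_of_ne_nil _ hdne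
      exact ⟨z, hz, Finset.mem_univ _⟩
    apply le_antisymm
    · obtain ⟨T, hT, hTc⟩ := Nat.sInf_mem hBne
      set D : Finset α :=
        Finset.univ.filter (fun u => (.inl (.inl u) : GVt α EH) ∈ T.image bmap) with hDdef
      have hDfeas : ∀ q : List α, q.Chain' EH → q.length = L → ∃ u ∈ q, u ∈ D := by
        intro q hc hl
        obtain ⟨u, hu, hmem⟩ := dvdcl T hT q hc hl
        exact ⟨u, hu, Finset.mem_filter.2 ⟨Finset.mem_univ _, hmem⟩⟩
      have hcard : D.card ≤ T.card := by
        calc D.card ≤ (T.image bmap).card := by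
              refine Finset.card_le_card_of_injOn (fun u => (.inl (.inl u) : GVt α EH))
                (fun a ha => ?_) (fun a _ b _ h => by simpa using h)
              exact (Finset.mem_filter.1 ha).2
          _ ≤ T.card := Finset.card_image_le
      refine le_trans (Nat.sInf_le ⟨D, hDfeas, rfl⟩) ?_
      rw [← hTc]
      exact hcard
    · obtain ⟨D, hD, hDc⟩ := Nat.sInf_mem hAne
      have hc : (D.image (fun u => (.inl (.inl u) : GVt α EH))).card = D.card :=
        Finset.card_image_of_injective _ (fun a b h => by simpa using h)
      refine le_trans (Nat.sInf_le ⟨_, tfeasOf D hD, rfl⟩) ?_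
      rw [hc, hDc]
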